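/- Conversely to the previous statement: let f_1, …, f_d ∈ K be nonzero with P = {i : f_i > 0} nonempty, and let z ∈ ℝ^d satisfy max_{i ∈ P}(z_i + deg f_i) = max_i (z_i + deg f_i). Then there exists X ∈ K^d with all coordinates positive, deg(X_i) = z_i for all i, and Σ_i f_i X_i > 0. -/

import Mathlib

open scoped Classical

/-- The field of Hahn (generalized Puiseux) series over ℝ with real exponents. -/
abbrev K := HahnSeries ℝ ℝ

/-- The degree: the leading exponent (max-plus convention). -/
noncomputable def deg (x : K) : ℝ := -x.order

/-- Positivity in the ordered field `K`: positive leading coefficient. -/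
def Kpos (x : K) : Prop := 0 < x.coeff x.order

theorem exists_positive_lift_in_halfspace {d : ℕ} [NeZero d] (f : Fin d → K)
    (hf : ∀ i, f i ≠ 0)
    (hP : (Finset.univ.filter fun i => Kpos (f i)).Nonempty)
    (z : Fin d → ℝ)
    (hz : (Finset.univ.filter fun i => Kpos (f i)).sup' hP
            (fun i => z i + deg (f i)) =
          Finset.univ.sup' Finset.univ_nonempty (fun i => z i + deg (f i))) :
    ∃ X : Fin d → K, (∀ i, Kpos (X i)) ∧ (∀ i, deg (X i) = z i) ∧
      Kpos (∑ i, f i * X i) := by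
  set M : ℝ := Finset.univ.sup' Finset.univ_nonempty (fun i => z i + deg (f i)) with hM
  obtain ⟨i0, hi0P, hi0⟩ := Finset.exists_mem_eq_sup' hP (fun i => z i + deg (f i))
  rw [hz] at hi0
  have hpos0 : Kpos (f i0) := (Finset.mem_filter.mp hi0P).2
  -- leading coefficients
  set ℓ : Fin d → ℝ := fun j => (f j).coeff (f j).order with hℓ
  have hℓ0 : ∀ j, ℓ j ≠ 0 := fun j => HahnSeries.coeff_order_eq_zero.not.2 (hf j)
  have hℓi0 : 0 < ℓ i0 := hpos0
  set A : Finset (Fin d) := Finset.univ.filter (fun j => z j + deg (f j) = M) with hA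
  have hi0A : i0 ∈ A := Finset.mem_filter.mpr ⟨Finset.mem_univ _, hi0.symm⟩
  set S : ℝ := ∑ j ∈ A.erase i0, ℓ j with hS
  set lam : ℝ := (|S| + 1) / ℓ i0 with hlam
  have hlampos : 0 < lam := div_pos (by positivity) hℓi0
  set c : Fin d → ℝ := fun j => if j = i0 then lam else 1 with hc
  have hcpos : ∀ j, 0 < c j := by
    intro j; simp only [hc]; split <;> norm_num [hlampos]
  have hcne : ∀ j, c j ≠ 0 := fun j => (hcpos j).ne'
  set X : Fin d → K := fun j => HahnSeries.single (-z j) (c j) with hX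
  have hXord : ∀ j, (X j).order = -z j := fun j => HahnSeries.order_single (hcne j)
  have hle : ∀ j, z j + deg (f j) ≤ M := fun j =>
    Finset.le_sup' (fun i => z i + deg (f i)) (Finset.mem_univ j)
  -- coefficient of each product at a point b
  have hcoeff : ∀ j b, (f j * X j).coeff b = (f j).coeff (b + z j) * c j := by
    intro j b
    have h2 := HahnSeries.coeff_mul_single_add (r := c j) (x := f j) (a := b + z j) (b := -z j)
    rw [add_neg_cancel_right] at h2
    rw [hX]; exact h2
  have hkey : ∀ j b, b < -M → (f j * X j).coeff b = 0 := by
    intro j b hb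
    rw [hcoeff]
    have horder : (f j).order = -(deg (f j)) := by simp [deg]
    have : b + z j < (f j).order := by
      rw [horder]
      have := hle j
      linarith
    rw [HahnSeries.coeff_eq_zero_of_lt_order this, zero_mul]
  have hcoeffM : ∀ j, (f j * X j).coeff (-M) = if j ∈ A then ℓ j * c j else 0 := by
    intro j
    rw [hcoeff]
    by_cases hj : j ∈ A
    · have : -M + z j = (f j).order := by
        have := (Finset.mem_filter.mp hj).2
        simp only [deg] at this
        linarith
      rw [this, if_pos hj]
    · have hlt : z j + deg (f j) < M := lt_of_le_of_ne (hle j) (by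
        intro h; exact hj (Finset.mem_filter.mpr ⟨Finset.mem_univ _, h⟩))
      have : -M + z j < (f j).order := by
        simp only [deg] at hlt; linarith
      rw [HahnSeries.coeff_eq_zero_of_lt_order this, zero_mul, if_neg hj]
  -- total coefficient at -M
  have hsumcoeff : (∑ i, f i * X i).coeff (-M) = lam * ℓ i0 + S := by
    rw [show (∑ i, f i * X i).coeff (-M) = ∑ i, (f i * X i).coeff (-M) from
      map_sum (HahnSeries.coeff.addMonoidHom (-M)) _ _]
    calc ∑ i, (f i * X i).coeff (-M) = ∑ i ∈ A, ℓ i * c i := by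
          simp only [hcoeffM]
          rw [Finset.sum_ite_mem, Finset.univ_inter]
      _ = lam * ℓ i0 + S := by
          rw [← Finset.add_sum_erase _ _ hi0A]
          congr 1
          · simp [hc, mul_comm]
          · apply Finset.sum_congr rfl
            intro j hj
            have : j ≠ i0 := Finset.ne_of_mem_erase hj
            simp [hc, this]
  -- the coefficient at -M is positive
  have hposM : 0 < (∑ i, f i * X i).coeff (-M) := by
    rw [hsumcoeff, hlam, div_mul_cancel₀ _ (hℓ0 i0)]
    have := abs_nonneg S
    have := neg_abs_le S
    linarith
  have hne : (∑ i, f i * X i) ≠ 0 := fun h => by simp [h] at hposM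
  have hordle : (∑ i, f i * X i).order ≤ -M :=
    HahnSeries.order_le_of_coeff_ne_zero hposM.ne'
  have hordge : -M ≤ (∑ i, f i * X i).order := by
    by_contra h
    push_neg at h
    have h0 : (∑ i, f i * X i).coeff (∑ i, f i * X i).order = 0 := by
      rw [show (∑ i, f i * X i).coeff _ = ∑ i, (f i * X i).coeff (∑ i, f i * X i).order from
        map_sum (HahnSeries.coeff.addMonoidHom _) _ _]
      exact Finset.sum_eq_zero fun j _ => hkey j _ h
    exact HahnSeries.coeff_order_eq_zero.not.2 hne h0
  have hord : (∑ i, f i * X i).order = -M := le_antisymm hordle hordge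
  refine ⟨X, ?_, ?_, ?_⟩
  · intro j
    unfold Kpos
    rw [hXord j, hX]
    simpa using hcpos j
  · intro j
    unfold deg
    rw [hXord j, neg_neg]
  · unfold Kpos
    rw [hord]
    exact hposM
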